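/- If an n-uniform hypergraph H is not 2-colorable, then the number of ordered simple pairs of edges of H, m₂(H), satisfies m₂(H) ≥ n·C(2n−1, n). -/

import Mathlib

open Classical

/-- `π` separates the simple pair `(X, Y)`: with `X ∩ Y = {y}`, all of `X \ {y}`
precedes `y` and `y` precedes all of `Y \ {y}` in the ordering `π`. -/
def Separates {V : Type*} [Fintype V] [DecidableEq V] (π : V ≃ Fin (Fintype.card V))
    (X Y : Finset V) : Prop :=
  ∃ y, X ∩ Y = {y} ∧ (∀ x ∈ X, x ≠ y → π x < π y) ∧ (∀ z ∈ Y, z ≠ y → π y < π z)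

/-- A hypergraph with edge set `E` is 2-colorable if some 2-coloring of the vertices
leaves no edge monochromatic. -/
def TwoColorable {V : Type*} (E : Finset (Finset V)) : Prop :=
  ∃ c : V → Bool, ∀ X ∈ E, (∃ v ∈ X, c v = true) ∧ (∃ v ∈ X, c v = false)

/-- `m₂(H)`: the number of ordered simple pairs of edges. -/
def m2 {V : Type*} [DecidableEq V] (E : Finset (Finset V)) : ℕ :=
  ((E ×ˢ E).filter fun p => (p.1 ∩ p.2).card = 1).card

open Nat Finset

noncomputable def colStep {V : Type*} [Fintype V] [DecidableEq V] (E : Finset (Finset V))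
    (π : V ≃ Fin (Fintype.card V)) : ℕ → V → Bool
  | 0 => fun _ => true
  | k+1 => fun v =>
      if (π v : ℕ) = k then
        (if ∃ X ∈ E, v ∈ X ∧ (∀ x ∈ X, x ≠ v → π x < π v) ∧
            (∀ x ∈ X, x ≠ v → colStep E π k x = true) then false else true)
      else colStep E π k v

noncomputable def col {V : Type*} [Fintype V] [DecidableEq V] (E : Finset (Finset V))
    (π : V ≃ Fin (Fintype.card V)) (v : V) : Bool :=
  colStep E π ((π v : ℕ)+1) v

lemma colStep_stable {V : Type*} [Fintype V] [DecidableEq V] (E : Finset (Finset V))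
    (π : V ≃ Fin (Fintype.card V)) : ∀ (k : ℕ) (v : V), (π v : ℕ) < k →
    colStep E π k v = col E π v := by
  intro k
  induction k with
  | zero => intro v hv; omega
  | succ j ih =>
    intro v hv
    rcases eq_or_lt_of_le (Nat.lt_succ_iff.mp hv) with h | h
    · rw [col, ← h]
    · rw [colStep]
      simp only [Nat.lt_irrefl, if_neg (by omega : ¬ (π v : ℕ) = j)]
      exact ih v h

lemma col_spec {V : Type*} [Fintype V] [DecidableEq V] (E : Finset (Finset V))
    (π : V ≃ Fin (Fintype.card V)) (v : V) :
    col E π v = false ↔ ∃ X ∈ E, v ∈ X ∧ (∀ x ∈ X, x ≠ v → π x < π v) ∧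
      (∀ x ∈ X, x ≠ v → col E π x = true) := by
  have hcv : col E π v = colStep E π ((π v : ℕ)+1) v := rfl
  rw [hcv, colStep]; beta_reduce; rw [if_pos rfl]
  have hiff : (∃ X ∈ E, v ∈ X ∧ (∀ x ∈ X, x ≠ v → π x < π v) ∧
      (∀ x ∈ X, x ≠ v → colStep E π (π v : ℕ) x = true)) ↔
      (∃ X ∈ E, v ∈ X ∧ (∀ x ∈ X, x ≠ v → π x < π v) ∧
      (∀ x ∈ X, x ≠ v → col E π x = true)) := by
    constructor
    · rintro ⟨X, hXE, hvX, hlt, hcol⟩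
      exact ⟨X, hXE, hvX, hlt, fun x hx hxv => by
        rw [← colStep_stable E π (π v : ℕ) x (hlt x hx hxv)]; exact hcol x hx hxv⟩
    · rintro ⟨X, hXE, hvX, hlt, hcol⟩
      exact ⟨X, hXE, hvX, hlt, fun x hx hxv => by
        rw [colStep_stable E π (π v : ℕ) x (hlt x hx hxv)]; exact hcol x hx hxv⟩
  simp only [hiff]
  by_cases h : (∃ X ∈ E, v ∈ X ∧ (∀ x ∈ X, x ≠ v → π x < π v) ∧
      (∀ x ∈ X, x ≠ v → col E π x = true))
  · simp [h]
  · simp [h]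

lemma exists_separated {V : Type*} [Fintype V] [DecidableEq V] (E : Finset (Finset V))
    (hne : ∀ X ∈ E, X.Nonempty) (hnc : ¬ TwoColorable E) (π : V ≃ Fin (Fintype.card V)) :
    ∃ X ∈ E, ∃ Y ∈ E, (X ∩ Y).card = 1 ∧ Separates π X Y := by
  have h₀ : ¬ ∀ X ∈ E, (∃ v ∈ X, col E π v = true) ∧ (∃ v ∈ X, col E π v = false) :=
    fun h => hnc ⟨col E π, h⟩
  push_neg at h₀
  obtain ⟨X₀, hX₀, hmono⟩ := h₀
  rcases Classical.em (∃ v ∈ X₀, col E π v = true) with hblue | hred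
  · -- there is a blue vertex, so hmono says: no red vertex, i.e. all blue
    have hall : ∀ v ∈ X₀, col E π v = true := by
      intro v hv
      have := hmono hblue v hv
      simpa using this
    -- take the maximum; contradiction
    obtain ⟨v, hvX, hmax⟩ := Finset.exists_max_image X₀ (fun v => π v) (hne X₀ hX₀)
    have hvfalse : col E π v = false := by
      rw [col_spec]
      refine ⟨X₀, hX₀, hvX, fun x hx hxv => lt_of_le_of_ne (hmax x hx) ?_,
        fun x hx _ => hall x hx⟩
      exact fun h => hxv (π.injective h)
    rw [hall v hvX] at hvfalse; exact absurd hvfalse (by simp)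
  · -- all red
    have hall : ∀ v ∈ X₀, col E π v = false := by
      intro v hv
      by_contra hv'
      exact hred ⟨v, hv, by simpa using hv'⟩
    obtain ⟨y, hyX₀, hmin⟩ := Finset.exists_min_image X₀ (fun v => π v) (hne X₀ hX₀)
    obtain ⟨X, hXE, hyX, hlt, hbl⟩ := (col_spec E π y).mp (hall y hyX₀)
    have hXX₀ : X ∩ X₀ = {y} := by
      apply Finset.ext
      intro v
      simp only [Finset.mem_inter, Finset.mem_singleton]
      constructor
      · rintro ⟨hv1, hv2⟩
        by_contra hvy
        have := hbl v hv1 hvy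
        rw [hall v hv2] at this; exact absurd this (by simp)
      · rintro rfl; exact ⟨hyX, hyX₀⟩
    refine ⟨X, hXE, X₀, hX₀, by rw [hXX₀]; simp, ⟨y, hXX₀, hlt, fun z hz hzy =>
      lt_of_le_of_ne (hmin z hz) (fun h => hzy (π.injective h.symm))⟩⟩

lemma count_perm_fiber {α : Type*} [Fintype α] [DecidableEq α] {ι : Type*} [Fintype ι]
    [DecidableEq ι] (f g : α → ι)
    (h : ∀ i, Fintype.card {a // f a = i} = Fintype.card {a // g a = i}) :
    Fintype.card {ρ : Equiv.Perm α // g ∘ ρ = f} =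
      ∏ i, (Fintype.card {a // f a = i})! := by
  obtain ⟨τ, hτ⟩ : ∃ τ : Equiv.Perm α, g ∘ τ = f := by
    refine ⟨(Equiv.sigmaFiberEquiv f).symm.trans
      ((Equiv.sigmaCongrRight (fun i => Fintype.equivOfCardEq (h i))).trans
        (Equiv.sigmaFiberEquiv g)), ?_⟩
    funext a
    simp only [Function.comp_apply, Equiv.trans_apply]
    have h1 : (Equiv.sigmaFiberEquiv f).symm a = ⟨f a, ⟨a, rfl⟩⟩ := rfl
    rw [h1]
    have h2 : (Equiv.sigmaCongrRight (fun i => Fintype.equivOfCardEq (h i)))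
        ⟨f a, ⟨a, rfl⟩⟩ = ⟨f a, Fintype.equivOfCardEq (h (f a)) ⟨a, rfl⟩⟩ := rfl
    rw [h2]
    exact (Fintype.equivOfCardEq (h (f a)) ⟨a, rfl⟩).property
  have e : {ρ : Equiv.Perm α // f ∘ ρ = f} ≃ {ρ : Equiv.Perm α // g ∘ ρ = f} := by
    refine (Equiv.mulLeft τ).subtypeEquiv fun ρ => ?_
    have : g ∘ ⇑(τ * ρ) = f ∘ ⇑ρ := by
      funext a
      exact congrFun hτ (ρ a)
    rw [show ((Equiv.mulLeft τ) ρ) = τ * ρ from rfl, this]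
  rw [← Fintype.card_congr e]
  exact DomMulAct.stabilizer_card f

noncomputable def extS {V : Type*} [Fintype V] [DecidableEq V] (S : Finset V)
    (ρ : Equiv.Perm {v // v ∈ S}) : Equiv.Perm V :=
  ρ.extendDomain (Equiv.refl _)

lemma extS_apply {V : Type*} [Fintype V] [DecidableEq V] (S : Finset V)
    (ρ : Equiv.Perm {v // v ∈ S}) {v : V} (hv : v ∈ S) :
    extS S ρ v = (ρ ⟨v, hv⟩ : V) :=
  Equiv.Perm.extendDomain_apply_subtype ρ (Equiv.refl _) hv

lemma inner_count {V : Type*} [Fintype V] [DecidableEq V] {n : ℕ} (hn : 1 ≤ n)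
    (X Y : Finset V) (hX : X.card = n) (hY : Y.card = n) {y : V} (hI : X ∩ Y = {y})
    (π' : V ≃ Fin (Fintype.card V)) :
    Fintype.card {ρ : Equiv.Perm {v // v ∈ X ∪ Y} //
        Separates ((extS (X ∪ Y) ρ).trans π') X Y}
      = (n-1)! * (n-1)! := by
  set S := X ∪ Y with hSdef
  have hyXY : y ∈ X ∩ Y := by rw [hI]; exact mem_singleton_self y
  have hyX : y ∈ X := (mem_inter.mp hyXY).1
  have hyY : y ∈ Y := (mem_inter.mp hyXY).2
  have hyS : y ∈ S := mem_union_left _ hyX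
  set A := X.erase y with hAdef
  set B := Y.erase y with hBdef
  have hAcard : A.card = n - 1 := by rw [hAdef, card_erase_of_mem hyX, hX]
  have hBcard : B.card = n - 1 := by rw [hBdef, card_erase_of_mem hyY, hY]
  have hScard : S.card = 2*n - 1 := by
    have h1 := Finset.card_union_add_card_inter X Y
    rw [hI, Finset.card_singleton, hX, hY] at h1
    rw [hSdef]
    omega
  have hSfin : Fintype.card {v // v ∈ S} = 2*n - 1 := by
    rw [Fintype.card_coe, hScard]
  have hAS : ∀ v ∈ A, v ∈ S := fun v hv => mem_union_left _ (mem_of_mem_erase hv)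
  have hBS : ∀ v ∈ B, v ∈ S := fun v hv => mem_union_right _ (mem_of_mem_erase hv)
  -- classification functions
  set cl : {v // v ∈ S} → Fin 3 :=
    fun s => if (s : V) ∈ A then 0 else if (s : V) = y then 1 else 2 with hcldef
  set rk : {v // v ∈ S} → ℕ :=
    fun s => (univ.filter (fun t : {v // v ∈ S} => π' (t : V) < π' (s : V))).card with hrkdef
  set cl' : {v // v ∈ S} → Fin 3 :=
    fun s => if rk s < n - 1 then 0 else if rk s = n - 1 then 1 else 2 with hcl'def
  -- basic facts about cl
  have hclA : ∀ s, cl s = 0 ↔ (s : V) ∈ A := by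
    intro s
    simp only [hcldef]
    split_ifs with h1 h2 <;> simp_all
  have hcly : ∀ s, cl s = 1 ↔ (s : V) = y := by
    intro s
    simp only [hcldef]
    split_ifs with h1 h2 <;> simp_all
  have hclB : ∀ s, cl s = 2 ↔ (s : V) ∈ B := by
    intro s
    constructor
    · intro h
      have h1 : ¬ (s:V) ∈ A := by
        intro hA; rw [(hclA s).mpr hA] at h; exact absurd h (by decide)
      have h2 : ¬ (s:V) = y := by
        intro hy2; rw [(hcly s).mpr hy2] at h; exact absurd h (by decide)
      have hs := s.property
      rcases mem_union.mp hs with hsX | hsY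
      · exact absurd (Finset.mem_erase.mpr ⟨h2, hsX⟩) h1
      · exact Finset.mem_erase.mpr ⟨h2, hsY⟩
    · intro h
      have h2 : (s:V) ≠ y := Finset.ne_of_mem_erase h
      have h1 : ¬ (s:V) ∈ A := by
        intro hA
        have : (s:V) ∈ X ∩ Y := mem_inter.mpr ⟨mem_of_mem_erase hA, mem_of_mem_erase h⟩
        rw [hI, mem_singleton] at this
        exact h2 this
      simp only [hcldef]
      simp [h1, h2]
  -- rank facts
  have hmono : ∀ s t : {v // v ∈ S}, π' (s:V) < π' (t:V) → rk s < rk t := by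
    intro s t h
    apply Finset.card_lt_card
    rw [Finset.ssubset_iff_of_subset (fun u hu => by
      rw [mem_filter] at hu ⊢; exact ⟨hu.1, lt_trans hu.2 h⟩)]
    exact ⟨s, mem_filter.mpr ⟨mem_univ _, h⟩, by simp⟩
  have hrkinj : Function.Injective rk := by
    intro s t h
    by_contra hne
    have hv : (s:V) ≠ (t:V) := fun hh => hne (Subtype.ext hh)
    have hπ : π' (s:V) ≠ π' (t:V) := fun hh => hv (π'.injective hh)
    rcases lt_or_gt_of_ne hπ with hlt | hgt
    · exact absurd h (Nat.ne_of_lt (hmono s t hlt))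
    · exact absurd h.symm (Nat.ne_of_lt (hmono t s hgt))
  have hlt_of_rk : ∀ s t, rk s < rk t → π' (s:V) < π' (t:V) := by
    intro s t h
    rcases lt_trichotomy (π' (s:V)) (π' (t:V)) with hlt | heq | hgt
    · exact hlt
    · have : s = t := Subtype.ext (π'.injective heq)
      subst this
      exact absurd h (lt_irrefl _)
    · exact absurd (hmono t s hgt) (not_lt.mpr (le_of_lt h))
  have himg : univ.image rk = Finset.range (2*n - 1) := by
    apply Finset.eq_of_subset_of_card_le
    · intro k hk
      obtain ⟨s, _, rfl⟩ := Finset.mem_image.mp hk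
      rw [Finset.mem_range]
      have hsub : univ.filter (fun t : {v // v ∈ S} => π' (t:V) < π' (s:V)) ⊆
          univ.erase s := by
        intro t ht
        rw [mem_filter] at ht
        rw [Finset.mem_erase]
        exact ⟨fun hh => by subst hh; exact absurd ht.2 (lt_irrefl _), mem_univ _⟩
      have := Finset.card_le_card hsub
      rw [Finset.card_erase_of_mem (mem_univ _), Finset.card_univ, hSfin] at this
      simp only [hrkdef]
      omega
    · rw [Finset.card_range, Finset.card_image_of_injective _ hrkinj, Finset.card_univ,
        hSfin]
  have hcount : ∀ (p : ℕ → Prop) [DecidablePred p],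
      Fintype.card {s : {v // v ∈ S} // p (rk s)} =
        ((Finset.range (2*n-1)).filter p).card := by
    intro p hp
    rw [Fintype.card_subtype]
    calc (univ.filter fun s => p (rk s)).card
        = ((univ.filter fun s => p (rk s)).image rk).card :=
          (Finset.card_image_of_injective _ hrkinj).symm
      _ = ((univ.image rk).filter p).card := by rw [Finset.filter_image]
      _ = ((Finset.range (2*n-1)).filter p).card := by rw [himg]
  have hcl'0 : ∀ s, cl' s = 0 ↔ rk s < n - 1 := by
    intro s; simp only [hcl'def]; split_ifs with h1 h2
    · exact iff_of_true rfl h1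
    · exact iff_of_false (by decide) h1
    · exact iff_of_false (by decide) h1
  have hcl'1 : ∀ s, cl' s = 1 ↔ rk s = n - 1 := by
    intro s; simp only [hcl'def]; split_ifs with h1 h2
    · exact iff_of_false (by decide) (by omega)
    · exact iff_of_true rfl h2
    · exact iff_of_false (by decide) h2
  have hcl'2 : ∀ s, cl' s = 2 ↔ n - 1 < rk s := by
    intro s; simp only [hcl'def]; split_ifs with h1 h2
    · exact iff_of_false (by decide) (by omega)
    · exact iff_of_false (by decide) (by omega)
    · exact iff_of_true rfl (by omega)
  -- cl' fiber cards
  have hc'0 : Fintype.card {s // cl' s = 0} = n - 1 := by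
    have e1 : Fintype.card {s // cl' s = 0} =
        Fintype.card {s : {v // v ∈ S} // rk s < n - 1} :=
      Fintype.card_congr (Equiv.subtypeEquivRight (fun s => hcl'0 s))
    have e2 : Fintype.card {s : {v // v ∈ S} // rk s < n - 1} =
        ((Finset.range (2*n-1)).filter (fun k => k < n - 1)).card :=
      hcount (fun k => k < n - 1)
    have e3 : ((Finset.range (2*n-1)).filter (fun k => k < n - 1)) = Finset.range (n-1) := by
      ext k; simp only [Finset.mem_filter, Finset.mem_range]; omega
    rw [e1, e2, e3, Finset.card_range]
  have hc'1 : Fintype.card {s // cl' s = 1} = 1 := by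
    have e1 : Fintype.card {s // cl' s = 1} =
        Fintype.card {s : {v // v ∈ S} // rk s = n - 1} :=
      Fintype.card_congr (Equiv.subtypeEquivRight (fun s => hcl'1 s))
    have e2 : Fintype.card {s : {v // v ∈ S} // rk s = n - 1} =
        ((Finset.range (2*n-1)).filter (fun k => k = n - 1)).card :=
      hcount (fun k => k = n - 1)
    have e3 : ((Finset.range (2*n-1)).filter (fun k => k = n - 1)) = {n-1} := by
      ext k; simp only [Finset.mem_filter, Finset.mem_range, Finset.mem_singleton]; omega
    rw [e1, e2, e3, Finset.card_singleton]
  have hc'2 : Fintype.card {s // cl' s = 2} = n - 1 := by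
    have e1 : Fintype.card {s // cl' s = 2} =
        Fintype.card {s : {v // v ∈ S} // n - 1 < rk s} :=
      Fintype.card_congr (Equiv.subtypeEquivRight (fun s => hcl'2 s))
    have e2 : Fintype.card {s : {v // v ∈ S} // n - 1 < rk s} =
        ((Finset.range (2*n-1)).filter (fun k => n - 1 < k)).card :=
      hcount (fun k => n - 1 < k)
    have e3 : ((Finset.range (2*n-1)).filter (fun k => n - 1 < k)) = Finset.Ico n (2*n-1) := by
      ext k; simp only [Finset.mem_filter, Finset.mem_range, Finset.mem_Ico]; omega
    rw [e1, e2, e3, Nat.card_Ico]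
    omega
  -- cl fiber cards
  have hsubcard : ∀ T : Finset V, (∀ v ∈ T, v ∈ S) →
      Fintype.card {s : {v // v ∈ S} // (s : V) ∈ T} = T.card := by
    intro T hT
    rw [Fintype.card_congr (Equiv.subtypeSubtypeEquivSubtype (fun {x} hx => hT x hx))]
    exact Fintype.card_coe T
  have hc0 : Fintype.card {s // cl s = 0} = n - 1 := by
    rw [Fintype.card_congr (Equiv.subtypeEquivRight hclA), hsubcard A hAS, hAcard]
  have hc1 : Fintype.card {s // cl s = 1} = 1 := by
    rw [Fintype.card_congr (Equiv.subtypeEquivRight hcly)]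
    rw [Fintype.card_congr (Equiv.subtypeEquivRight
      (fun (s : {v // v ∈ S}) => show (s : V) = y ↔ s = ⟨y, hyS⟩ from
        ⟨fun h => Subtype.ext h, fun h => by rw [h]⟩))]
    exact Fintype.card_subtype_eq _
  have hc2 : Fintype.card {s // cl s = 2} = n - 1 := by
    rw [Fintype.card_congr (Equiv.subtypeEquivRight hclB), hsubcard B hBS, hBcard]
  have hfib : ∀ i : Fin 3, Fintype.card {s // cl s = i} = Fintype.card {s // cl' s = i} := by
    intro i
    fin_cases i
    · exact hc0.trans hc'0.symm
    · exact hc1.trans hc'1.symm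
    · exact hc2.trans hc'2.symm
  -- equivalence of the separation condition with the fiber condition
  have hsepiff : ∀ ρ : Equiv.Perm {v // v ∈ S},
      Separates ((extS S ρ).trans π') X Y ↔ cl' ∘ ρ = cl := by
    intro ρ
    have happ : ∀ (v : V) (hv : v ∈ S), ((extS S ρ).trans π') v = π' ((ρ ⟨v, hv⟩ : V)) := by
      intro v hv
      rw [Equiv.trans_apply, extS_apply S ρ hv]
    constructor
    · rintro ⟨y', hy', h1, h2⟩
      have hyy : y' = y := by
        have := hI.symm.trans hy'
        rw [Finset.singleton_inj] at this
        exact this.symm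
      rw [hyy] at h1 h2
      clear hyy hy'
      set c := ρ ⟨y, hyS⟩ with hcdef
      have hArk : ∀ s : {v // v ∈ S}, (s:V) ∈ A → π' ((ρ s : V)) < π' ((c:V)) := by
        intro s hs
        have := h1 (s:V) (mem_of_mem_erase hs) (Finset.ne_of_mem_erase hs)
        rwa [happ (s:V) s.property, happ y hyS, Subtype.coe_eta] at this
      have hBrk : ∀ s : {v // v ∈ S}, (s:V) ∈ B → π' ((c:V)) < π' ((ρ s : V)) := by
        intro s hs
        have := h2 (s:V) (mem_of_mem_erase hs) (Finset.ne_of_mem_erase hs)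
        rwa [happ (s:V) s.property, happ y hyS, Subtype.coe_eta] at this
      -- rk c = n - 1
      have hrkc : rk c = n - 1 := by
        have hlow : n - 1 ≤ rk c := by
          have hsub : (univ.filter (fun s : {v // v ∈ S} => (s:V) ∈ A)).image ρ ⊆
              univ.filter (fun t => π' (t:V) < π' (c:V)) := by
            intro t ht
            obtain ⟨s, hs, rfl⟩ := Finset.mem_image.mp ht
            rw [mem_filter] at hs ⊢
            exact ⟨mem_univ _, hArk s hs.2⟩
          have := Finset.card_le_card hsub
          rw [Finset.card_image_of_injective _ ρ.injective] at this
          have hAc : (univ.filter (fun s : {v // v ∈ S} => (s:V) ∈ A)).card = n - 1 := by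
            have := hsubcard A hAS
            rw [Fintype.card_subtype] at this
            rw [this, hAcard]
          rw [hAc] at this
          exact this
        have hhigh : n - 1 ≤ (univ.filter (fun t : {v // v ∈ S} =>
            π' (c:V) < π' (t:V))).card := by
          have hsub : (univ.filter (fun s : {v // v ∈ S} => (s:V) ∈ B)).image ρ ⊆
              univ.filter (fun t => π' (c:V) < π' (t:V)) := by
            intro t ht
            obtain ⟨s, hs, rfl⟩ := Finset.mem_image.mp ht
            rw [mem_filter] at hs ⊢
            exact ⟨mem_univ _, hBrk s hs.2⟩
          have := Finset.card_le_card hsub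
          rw [Finset.card_image_of_injective _ ρ.injective] at this
          have hBc : (univ.filter (fun s : {v // v ∈ S} => (s:V) ∈ B)).card = n - 1 := by
            have := hsubcard B hBS
            rw [Fintype.card_subtype] at this
            rw [this, hBcard]
          rw [hBc] at this
          exact this
        have hdisj : Disjoint (univ.filter (fun t : {v // v ∈ S} => π' (t:V) < π' (c:V)))
            (univ.filter (fun t => π' (c:V) < π' (t:V))) := by
          rw [Finset.disjoint_left]
          intro t ht1 ht2
          rw [mem_filter] at ht1 ht2
          exact absurd (lt_trans ht1.2 ht2.2) (lt_irrefl _)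
        have hsub2 : (univ.filter (fun t : {v // v ∈ S} => π' (t:V) < π' (c:V))) ∪
            (univ.filter (fun t => π' (c:V) < π' (t:V))) ⊆ univ.erase c := by
          intro t ht
          rw [Finset.mem_erase]
          refine ⟨?_, mem_univ _⟩
          rintro rfl
          rcases Finset.mem_union.mp ht with h | h <;>
            · rw [mem_filter] at h; exact absurd h.2 (lt_irrefl _)
        have := Finset.card_le_card hsub2
        rw [Finset.card_union_of_disjoint hdisj, Finset.card_erase_of_mem (mem_univ _),
          Finset.card_univ, hSfin] at this
        simp only [hrkdef] at hlow hhigh ⊢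
        omega
      funext s
      simp only [Function.comp_apply]
      have hsS := s.property
      by_cases hsA : (s:V) ∈ A
      · rw [(hclA s).mpr hsA]
        rw [hcl'0]
        have := hmono _ _ (hArk s hsA)
        omega
      · by_cases hsy : (s:V) = y
        · rw [(hcly s).mpr hsy]
          have : s = ⟨y, hyS⟩ := Subtype.ext hsy
          rw [this, hcl'1 _]
          exact hrkc
        · have hsB : (s:V) ∈ B := by
            rcases mem_union.mp hsS with hsX | hsY
            · exact absurd (Finset.mem_erase.mpr ⟨hsy, hsX⟩) hsA
            · exact Finset.mem_erase.mpr ⟨hsy, hsY⟩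
          rw [(hclB s).mpr hsB, hcl'2]
          have := hmono _ _ (hBrk s hsB)
          omega
    · intro hcc
      have hkey : ∀ s : {v // v ∈ S}, cl' (ρ s) = cl s := fun s => congrFun hcc s
      have hrc : rk (ρ ⟨y, hyS⟩) = n - 1 := by
        have := hkey ⟨y, hyS⟩
        rw [(hcly _).mpr rfl] at this
        exact (hcl'1 _).mp this
      refine ⟨y, hI, ?_, ?_⟩
      · intro x hx hxy
        have hxA : x ∈ A := Finset.mem_erase.mpr ⟨hxy, hx⟩
        have hxS : x ∈ S := hAS x hxA
        have := hkey ⟨x, hxS⟩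
        rw [(hclA _).mpr hxA] at this
        have hr : rk (ρ ⟨x, hxS⟩) < n - 1 := (hcl'0 _).mp this
        have := hlt_of_rk _ _ (by omega : rk (ρ ⟨x, hxS⟩) < rk (ρ ⟨y, hyS⟩))
        rw [happ x hxS, happ y hyS]
        exact this
      · intro z hz hzy
        have hzB : z ∈ B := Finset.mem_erase.mpr ⟨hzy, hz⟩
        have hzS : z ∈ S := hBS z hzB
        have := hkey ⟨z, hzS⟩
        rw [(hclB _).mpr hzB] at this
        have hr : n - 1 < rk (ρ ⟨z, hzS⟩) := (hcl'2 _).mp this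
        have := hlt_of_rk _ _ (by omega : rk (ρ ⟨y, hyS⟩) < rk (ρ ⟨z, hzS⟩))
        rw [happ z hzS, happ y hyS]
        exact this
  -- final assembly
  calc Fintype.card {ρ : Equiv.Perm {v // v ∈ S} // Separates ((extS S ρ).trans π') X Y}
      = Fintype.card {ρ : Equiv.Perm {v // v ∈ S} // cl' ∘ ρ = cl} :=
        Fintype.card_congr (Equiv.subtypeEquivRight (fun ρ => hsepiff ρ))
    _ = ∏ i, (Fintype.card {s // cl s = i})! := count_perm_fiber cl cl' hfib
    _ = (n-1)! * (n-1)! := by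
        rw [Fin.prod_univ_three (fun i => (Fintype.card {s // cl s = i})!)]
        simp only [hc0, hc1, hc2, Nat.factorial_one, mul_one, one_mul]

lemma sep_count {V : Type*} [Fintype V] [DecidableEq V] {n : ℕ} (hn : 1 ≤ n)
    (X Y : Finset V) (hX : X.card = n) (hY : Y.card = n) {y : V} (hI : X ∩ Y = {y}) :
    (univ.filter fun π : V ≃ Fin (Fintype.card V) => Separates π X Y).card * (2*n-1)!
      = (Fintype.card V)! * ((n-1)! * (n-1)!) := by
  set S := X ∪ Y with hSdef
  have hyXY : y ∈ X ∩ Y := by rw [hI]; exact mem_singleton_self y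
  have hScard : S.card = 2*n - 1 := by
    have h1 := Finset.card_union_add_card_inter X Y
    rw [hI, Finset.card_singleton, hX, hY] at h1
    rw [hSdef]
    omega
  have hperm : Fintype.card (Equiv.Perm {v // v ∈ S}) = (2*n-1)! := by
    rw [Fintype.card_perm, Fintype.card_coe, hScard]
  have hequiv : Fintype.card (V ≃ Fin (Fintype.card V)) = (Fintype.card V)! :=
    Fintype.card_equiv (Fintype.equivFin V)
  have fib : ∀ π' : V ≃ Fin (Fintype.card V),
      (((univ.filter fun π : V ≃ Fin (Fintype.card V) => Separates π X Y) ×ˢ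
        (univ : Finset (Equiv.Perm {v // v ∈ S}))).filter
          (fun q => (extS S q.2).trans q.1 = π')).card = (n-1)! * (n-1)! := by
    intro π'
    rw [← inner_count hn X Y hX hY hI π', Fintype.card_subtype]
    apply Finset.card_bij (fun q _ => q.2⁻¹)
    · rintro ⟨π, ρ⟩ hq
      rw [mem_filter] at hq ⊢
      obtain ⟨hq1, hq2⟩ := hq
      rw [mem_product, mem_filter] at hq1
      refine ⟨mem_univ _, ?_⟩
      have hρ : extS S ρ⁻¹ = (extS S ρ)⁻¹ := by
        rw [extS, extS, ← Equiv.Perm.extendDomain_inv]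
      have hπ : (extS S ρ⁻¹).trans π' = π := by
        rw [hρ, ← hq2]
        ext v
        simp [Equiv.Perm.inv_def]
      rw [hπ]
      exact hq1.1.2
    · rintro ⟨π, ρ⟩ hq ⟨π2, ρ2⟩ hq2 heq
      simp only at heq
      have hρ : ρ = ρ2 := by
        have := congrArg (·⁻¹) heq
        simpa using this
      subst hρ
      rw [mem_filter] at hq hq2
      have : π = π2 := by
        have e1 := hq.2
        have e2 := hq2.2
        rw [← e2] at e1
        apply Equiv.ext
        intro v
        have := congrFun (congrArg (fun (e : V ≃ Fin (Fintype.card V)) => (e : V → Fin (Fintype.card V))) e1) ((extS S ρ).symm v)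
        simpa using this
      rw [this]
    · intro ρ hρ
      rw [mem_filter] at hρ
      refine ⟨((extS S ρ).trans π', ρ⁻¹), ?_, by simp⟩
      rw [mem_filter, mem_product, mem_filter]
      refine ⟨⟨⟨mem_univ _, hρ.2⟩, mem_univ _⟩, ?_⟩
      have hρinv : extS S ρ⁻¹ = (extS S ρ)⁻¹ := by
        rw [extS, extS, ← Equiv.Perm.extendDomain_inv]
      rw [hρinv]
      ext v
      simp [Equiv.Perm.inv_def]
  have main := Finset.card_eq_sum_card_fiberwise
    (f := fun q : (V ≃ Fin (Fintype.card V)) × Equiv.Perm {v // v ∈ S} =>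
      (extS S q.2).trans q.1)
    (s := (univ.filter fun π : V ≃ Fin (Fintype.card V) => Separates π X Y) ×ˢ
      (univ : Finset (Equiv.Perm {v // v ∈ S})))
    (t := univ) (fun x _ => mem_univ _)
  rw [Finset.card_product, Finset.card_univ, hperm] at main
  rw [Finset.sum_congr rfl (fun π' _ => fib π'), Finset.sum_const, smul_eq_mul,
    Finset.card_univ, hequiv] at main
  exact main

theorem stmt_1 {V : Type*} [Fintype V] [DecidableEq V] (n : ℕ)
    (E : Finset (Finset V)) (hunif : ∀ X ∈ E, X.card = n)
    (hnc : ¬ TwoColorable E) :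
    n * Nat.choose (2 * n - 1) n ≤ m2 E := by
  rcases Nat.eq_zero_or_pos n with rfl | hn
  · simp
  have hne : ∀ X ∈ E, X.Nonempty := fun X hX =>
    Finset.card_pos.mp (by rw [hunif X hX]; omega)
  rw [m2]
  set P := (E ×ˢ E).filter fun p => (p.1 ∩ p.2).card = 1 with hP
  have hcov : (univ : Finset (V ≃ Fin (Fintype.card V))) ⊆
      P.biUnion (fun p => univ.filter fun π => Separates π p.1 p.2) := by
    intro π _
    obtain ⟨X, hXE, Y, hYE, hcard1, hsep⟩ := exists_separated E hne hnc π
    exact mem_biUnion.mpr ⟨(X,Y), mem_filter.mpr ⟨mem_product.mpr ⟨hXE, hYE⟩, hcard1⟩,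
      mem_filter.mpr ⟨mem_univ _, hsep⟩⟩
  have hsum : (univ : Finset (V ≃ Fin (Fintype.card V))).card ≤
      ∑ p ∈ P, (univ.filter fun π => Separates π p.1 p.2).card :=
    le_trans (Finset.card_le_card hcov) Finset.card_biUnion_le
  have hper : ∀ p ∈ P, (univ.filter fun π => Separates π p.1 p.2).card * (2*n-1)!
      = (Fintype.card V)! * ((n-1)! * (n-1)!) := by
    intro p hp
    rw [hP, mem_filter, mem_product] at hp
    obtain ⟨⟨h1, h2⟩, hcard⟩ := hp
    obtain ⟨y, hy⟩ := Finset.card_eq_one.mp hcard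
    exact sep_count hn p.1 p.2 (hunif _ h1) (hunif _ h2) hy
  have huniv : (univ : Finset (V ≃ Fin (Fintype.card V))).card = (Fintype.card V)! := by
    rw [Finset.card_univ]; exact Fintype.card_equiv (Fintype.equivFin V)
  have h2 : (Fintype.card V)! * (2*n-1)! ≤
      P.card * ((Fintype.card V)! * ((n-1)! * (n-1)!)) := by
    calc (Fintype.card V)! * (2*n-1)!
        = (univ : Finset (V ≃ Fin (Fintype.card V))).card * (2*n-1)! := by rw [huniv]
      _ ≤ (∑ p ∈ P, (univ.filter fun π => Separates π p.1 p.2).card) * (2*n-1)! :=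
          Nat.mul_le_mul_right _ hsum
      _ = ∑ p ∈ P, (univ.filter fun π => Separates π p.1 p.2).card * (2*n-1)! :=
          Finset.sum_mul ..
      _ = ∑ _p ∈ P, (Fintype.card V)! * ((n-1)! * (n-1)!) := Finset.sum_congr rfl hper
      _ = P.card * ((Fintype.card V)! * ((n-1)! * (n-1)!)) := by
          rw [Finset.sum_const, smul_eq_mul]
  have hk : (n * Nat.choose (2*n-1) n) * ((n-1)! * (n-1)!) = (2*n-1)! := by
    have h := Nat.choose_mul_factorial_mul_factorial (show n ≤ 2*n-1 by omega)
    have h2n : 2*n-1-n = n-1 := by omega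
    rw [h2n] at h
    have hnf : n * (n-1)! = n ! := Nat.mul_factorial_pred hn.ne'
    calc (n * Nat.choose (2*n-1) n) * ((n-1)! * (n-1)!)
        = Nat.choose (2*n-1) n * (n * (n-1)!) * (n-1)! := by ring
      _ = Nat.choose (2*n-1) n * n ! * (n-1)! := by rw [hnf]
      _ = (2*n-1)! := h
  have hpos : 0 < (Fintype.card V)! * ((n-1)! * (n-1)!) :=
    Nat.mul_pos (Nat.factorial_pos _) (Nat.mul_pos (Nat.factorial_pos _) (Nat.factorial_pos _))
  apply Nat.le_of_mul_le_mul_right ?_ hpos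
  calc (n * Nat.choose (2*n-1) n) * ((Fintype.card V)! * ((n-1)! * (n-1)!))
      = (Fintype.card V)! * ((n * Nat.choose (2*n-1) n) * ((n-1)! * (n-1)!)) := by ring
    _ = (Fintype.card V)! * (2*n-1)! := by rw [hk]
    _ ≤ P.card * ((Fintype.card V)! * ((n-1)! * (n-1)!)) := h2
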